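/- Let f₁,…,fₙ : ℝ^d → ℝ be differentiable, convex and L-smooth (L > 0), let f = (1/n)·Σᵢ₌₁ⁿ fᵢ, fix points x, w ∈ ℝ^d and set gᵢ = ∇fᵢ(x) − ∇fᵢ(w). Let Y₁,…,Yₙ be independent square-integrable random vectors in ℝ^d on a common probability space satisfying E[Yᵢ] = gᵢ and E[‖Yᵢ‖²] ≤ ω‖gᵢ‖² for some ω ≥ 1. Then E[‖(1/n)·Σᵢ₌₁ⁿ Yᵢ + ∇f(w) − ∇f(x)‖²] ≤ (2Lω/n)·(f(w) − f(x) − ⟨∇f(x), w − x⟩). -/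

import Mathlib

open MeasureTheory ProbabilityTheory
open scoped RealInnerProductSpace

section Aux

variable {E : Type*} [NormedAddCommGroup E] [InnerProductSpace ℝ E] [CompleteSpace E]

lemma dhpl_convex_first_order {φ : E → ℝ} (hd : Differentiable ℝ φ)
    (hc : ConvexOn ℝ Set.univ φ) (x z : E) :
    φ x + ⟪gradient φ x, z - x⟫ ≤ φ z := by
  set ψ : ℝ → ℝ := fun t => φ (x + t • (z - x)) with hψdef
  have hC : HasDerivAt (fun t : ℝ => x + t • (z - x)) (z - x) 0 := by
    simpa using ((hasDerivAt_id (0:ℝ)).smul_const (z - x)).const_add x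
  have h1 : HasFDerivAt φ ((InnerProductSpace.toDual ℝ _) (gradient φ x)) x :=
    hasGradientAt_iff_hasFDerivAt.mp (hd x).hasGradientAt
  have h1' : HasFDerivAt φ ((InnerProductSpace.toDual ℝ _) (gradient φ x))
      (x + (0:ℝ) • (z - x)) := by simpa using h1
  have hψ : HasDerivAt ψ ⟪gradient φ x, z - x⟫ 0 := by
    exact h1'.comp_hasDerivAt 0 hC
  have hconvψ : ConvexOn ℝ Set.univ ψ := by
    have h2 := hc.comp_affineMap (AffineMap.lineMap x z : ℝ →ᵃ[ℝ] E)
    have : (fun t : ℝ => φ (x + t • (z - x))) = φ ∘ (AffineMap.lineMap x z : ℝ →ᵃ[ℝ] E) := by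
      funext t
      simp [AffineMap.lineMap_apply, add_comm]
    rw [hψdef, this]
    simpa using h2
  have key := hconvψ.le_slope_of_hasDerivAt (Set.mem_univ (0:ℝ)) (Set.mem_univ (1:ℝ))
    one_pos hψ
  have hs : slope ψ 0 1 = φ z - φ x := by
    simp [slope_def_field, hψdef]
  rw [hs] at key
  linarith

lemma dhpl_cocoercive {φ : E → ℝ} (hd : Differentiable ℝ φ)
    (hc : ConvexOn ℝ Set.univ φ) {L : ℝ} (hL : 0 < L)
    (hs : ∀ u v : E, φ v ≤ φ u + ⟪gradient φ u, v - u⟫ + L / 2 * ‖v - u‖ ^ 2)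
    (x w : E) :
    ‖gradient φ x - gradient φ w‖ ^ 2 ≤ 2 * L * (φ w - φ x - ⟪gradient φ x, w - x⟫) := by
  set G : E := gradient φ w - gradient φ x with hG
  set z : E := w - (1 / L) • G with hz
  have h1 := dhpl_convex_first_order hd hc x z
  have h2 := hs w z
  have hzw : z - w = -((1 / L) • G) := by rw [hz]; abel
  have e2 : ⟪gradient φ w, z - w⟫ = -(1/L) * ⟪gradient φ w, G⟫ := by
    rw [hzw, inner_neg_right, inner_smul_right]; ring
  have e3 : ‖z - w‖ ^ 2 = (1/L)^2 * ‖G‖^2 := by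
    rw [hzw]; rw [norm_neg, norm_smul]
    rw [mul_pow, Real.norm_eq_abs, abs_of_pos (by positivity : (0:ℝ) < 1/L)]
  have e4 : ⟪gradient φ x, z - x⟫ = ⟪gradient φ x, w - x⟫ - (1/L) * ⟪gradient φ x, G⟫ := by
    have : z - x = (w - x) - (1/L) • G := by rw [hz]; abel
    rw [this, inner_sub_right, inner_smul_right]
  have e5 : ⟪gradient φ w, G⟫ - ⟪gradient φ x, G⟫ = ‖G‖^2 := by
    rw [← inner_sub_left, ← hG, real_inner_self_eq_norm_sq]
  have hLne : L ≠ 0 := ne_of_gt hL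
  have comb : φ x + ⟪gradient φ x, w - x⟫ + (1/(2*L)) * ‖G‖^2 ≤ φ w := by
    rw [e4] at h1
    rw [e2, e3] at h2
    have : L / 2 * ((1/L)^2 * ‖G‖^2) = (1/(2*L)) * ‖G‖^2 := by field_simp
    rw [this] at h2
    have e6 : (1/L) * ⟪gradient φ w, G⟫ - (1/L) * ⟪gradient φ x, G⟫ = (1/L) * ‖G‖^2 := by
      rw [← mul_sub, e5]
    have e7 : (1/L) * ‖G‖^2 = 1/(2*L) * ‖G‖^2 + 1/(2*L) * ‖G‖^2 := by
      field_simp; ring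
    linarith
  have hnorm : ‖gradient φ x - gradient φ w‖ = ‖G‖ := by rw [hG, norm_sub_rev]
  rw [hnorm]
  have : (1/(2*L)) * ‖G‖^2 ≤ φ w - φ x - ⟪gradient φ x, w - x⟫ := by linarith
  calc ‖G‖^2 = 2 * L * ((1/(2*L)) * ‖G‖^2) := by field_simp
  _ ≤ 2 * L * (φ w - φ x - ⟪gradient φ x, w - x⟫) := by
      apply mul_le_mul_of_nonneg_left this (by positivity)

lemma dhpl_inner_integrable {α : Type*} [MeasurableSpace α] {μ : Measure α}
    {f h : α → E} (hf : MemLp f 2 μ) (hh : MemLp h 2 μ) :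
    Integrable (fun a => ⟪f a, h a⟫) μ := by
  refine Integrable.mono' ((hf.norm.integrable_sq).add (hh.norm.integrable_sq))
    (hf.aestronglyMeasurable.inner hh.aestronglyMeasurable)
    (Filter.Eventually.of_forall fun a => ?_)
  rw [Real.norm_eq_abs]
  calc |⟪f a, h a⟫| ≤ ‖f a‖ * ‖h a‖ := abs_real_inner_le_norm _ _
  _ ≤ ‖f a‖^2 + ‖h a‖^2 := by nlinarith [sq_nonneg (‖f a‖ - ‖h a‖), sq_nonneg (‖f a‖ + ‖h a‖)]

end Aux

/-- **Variance bound for the compressed gradient estimator of DHPL-Katyusha**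
(efficient Lipschitz constant `L̃ = L·ω/n`): if `f₁, …, fₙ : ℝ^d → ℝ` are differentiable,
convex and `L`-smooth, `f = (1/n)·∑ᵢ fᵢ`, `gᵢ = ∇fᵢ(x) − ∇fᵢ(w)`, and `Y₁, …, Yₙ` are
independent square-integrable random vectors with `E[Yᵢ] = gᵢ` and `E[‖Yᵢ‖²] ≤ ω·‖gᵢ‖²`
for some `ω ≥ 1`, then
`E[‖(1/n)·∑ᵢ Yᵢ + ∇f(w) − ∇f(x)‖²] ≤ (2Lω/n)·(f(w) − f(x) − ⟪∇f(x), w − x⟫)`. -/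
theorem dhpl_katyusha_variance_bound
    {d n : ℕ} (hn : 0 < n) {L : ℝ} (hL : 0 < L)
    (f : Fin n → EuclideanSpace ℝ (Fin d) → ℝ)
    (hdiff : ∀ i, Differentiable ℝ (f i))
    (hconv : ∀ i, ConvexOn ℝ Set.univ (f i))
    (hsmooth : ∀ i, ∀ u v : EuclideanSpace ℝ (Fin d),
      f i v ≤ f i u + ⟪gradient (f i) u, v - u⟫ + L / 2 * ‖v - u‖ ^ 2)
    (F : EuclideanSpace ℝ (Fin d) → ℝ)
    (hF : F = fun u => (1 / (n : ℝ)) * ∑ i, f i u)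
    (x w : EuclideanSpace ℝ (Fin d))
    (g : Fin n → EuclideanSpace ℝ (Fin d))
    (hg : ∀ i, g i = gradient (f i) x - gradient (f i) w)
    {Ω : Type*} [MeasureSpace Ω] [IsProbabilityMeasure (ℙ : Measure Ω)]
    (Y : Fin n → Ω → EuclideanSpace ℝ (Fin d))
    (hYmeas : ∀ i, Measurable (Y i))
    (hY2 : ∀ i, MemLp (Y i) 2 ℙ)
    (hYindep : iIndepFun Y ℙ)
    {ω₀ : ℝ} (hω₀ : 1 ≤ ω₀)
    (hYmean : ∀ i, ∫ a, Y i a ∂ℙ = g i)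
    (hYsecond : ∀ i, ∫ a, ‖Y i a‖ ^ 2 ∂ℙ ≤ ω₀ * ‖g i‖ ^ 2) :
    ∫ a, ‖(1 / (n : ℝ)) • ∑ i, Y i a + gradient F w - gradient F x‖ ^ 2 ∂ℙ
      ≤ 2 * L * ω₀ / n * (F w - F x - ⟪gradient F x, w - x⟫) := by
  classical
  have hnR : (0:ℝ) < (n:ℝ) := by exact_mod_cast hn
  -- gradient of F
  have hgradF : ∀ u : EuclideanSpace ℝ (Fin d), gradient F u = (1/(n:ℝ)) • ∑ i, gradient (f i) u := by
    intro u
    have hfd : ∀ i : Fin n, HasFDerivAt (f i)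
        ((InnerProductSpace.toDual ℝ _) (gradient (f i) u)) u :=
      fun i => hasGradientAt_iff_hasFDerivAt.mp ((hdiff i) u).hasGradientAt
    have hsum : HasFDerivAt (fun v => ∑ i, f i v)
        (∑ i, (InnerProductSpace.toDual ℝ _) (gradient (f i) u)) u :=
      HasFDerivAt.fun_sum (fun i _ => hfd i)
    have hFd : HasFDerivAt F
        ((1/(n:ℝ)) • ∑ i, (InnerProductSpace.toDual ℝ _) (gradient (f i) u)) u := by
      rw [hF]
      simpa using hsum.const_mul (1/(n:ℝ))
    have : HasGradientAt F ((1/(n:ℝ)) • ∑ i, gradient (f i) u) u := by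
      rw [hasGradientAt_iff_hasFDerivAt]
      convert hFd using 1
      · rfl
      · rfl
      rw [_root_.map_smul, map_sum]
    exact this.gradient
  -- centered variables
  set Z : Fin n → Ω → EuclideanSpace ℝ (Fin d) := fun i a => Y i a - g i with hZdef
  have hZ2 : ∀ i, MemLp (Z i) 2 ℙ := fun i => (hY2 i).sub (memLp_const (g i))
  have hYint : ∀ i, Integrable (Y i) ℙ := fun i => (hY2 i).integrable one_le_two
  have hZint : ∀ i, Integrable (Z i) ℙ := fun i => (hZ2 i).integrable one_le_two
  have hZmean : ∀ i, ∫ a, Z i a ∂ℙ = 0 := by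
    intro i
    rw [hZdef]
    simp only
    rw [integral_sub (hYint i) (integrable_const _), hYmean i, integral_const]
    simp
  -- coordinates
  have hZcoord2 : ∀ (i : Fin n) (k : Fin d), MemLp (fun a => Z i a k) 2 ℙ := by
    intro i k
    have := MemLp.const_inner (𝕜 := ℝ) (EuclideanSpace.single k (1:ℝ)) (hZ2 i)
    simpa [EuclideanSpace.inner_single_left] using this
  have hZcoordint : ∀ (i : Fin n) (k : Fin d), Integrable (fun a => Z i a k) ℙ :=
    fun i k => (hZcoord2 i k).integrable one_le_two
  have hZcoordmean : ∀ (i : Fin n) (k : Fin d), ∫ a, Z i a k ∂ℙ = 0 := by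
    intro i k
    have := (EuclideanSpace.proj k : EuclideanSpace ℝ (Fin d) →L[ℝ] ℝ).integral_comp_comm (hZint i)
    simpa [hZmean i] using this
  -- independence of coordinates
  have hZindep : ∀ (i j : Fin n), i ≠ j → ∀ k : Fin d,
      IndepFun (fun a => Z i a k) (fun a => Z j a k) ℙ := by
    intro i j hij k
    have hbase : IndepFun (Y i) (Y j) ℙ := hYindep.indepFun hij
    have hm : ∀ c : EuclideanSpace ℝ (Fin d), Measurable (fun u : EuclideanSpace ℝ (Fin d) => (u - c) k) := by
      intro c
      exact (EuclideanSpace.proj k : EuclideanSpace ℝ (Fin d) →L[ℝ] ℝ).measurable.comp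
        (measurable_id.sub measurable_const)
    exact hbase.comp (hm (g i)) (hm (g j))
  -- vanishing cross terms
  have hcross : ∀ (i j : Fin n), i ≠ j → ∫ a, ⟪Z i a, Z j a⟫ ∂ℙ = 0 := by
    intro i j hij
    have hpt : ∀ a, ⟪Z i a, Z j a⟫ = ∑ k : Fin d, (Z i a k) * (Z j a k) := by
      intro a
      rw [PiLp.inner_apply]
      simp [RCLike.inner_apply]
      exact Finset.sum_congr rfl fun _ _ => mul_comm _ _
    simp_rw [hpt]
    rw [integral_finset_sum _ (fun k _ => ?_)]
    · apply Finset.sum_eq_zero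
      intro k _
      have hind := hZindep i j hij k
      have := hind.integral_mul_eq_mul_integral (hZcoord2 i k).aestronglyMeasurable
        (hZcoord2 j k).aestronglyMeasurable
      have hmul : (fun a => Z i a k * Z j a k)
          = (fun a => Z i a k) * (fun a => Z j a k) := rfl
      rw [hmul, this, hZcoordmean i k, hZcoordmean j k, mul_zero]
    · exact ((hZindep i j hij k).integrable_mul (hZcoordint i k) (hZcoordint j k))
  -- integrability of inner products
  have hII : ∀ i j : Fin n, Integrable (fun a => ⟪Z i a, Z j a⟫) ℙ :=
    fun i j => dhpl_inner_integrable (hZ2 i) (hZ2 j)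
  -- variance of the sum
  have hvar : ∫ a, ‖∑ i, Z i a‖^2 ∂ℙ = ∑ i, ∫ a, ‖Z i a‖^2 ∂ℙ := by
    have hpt : ∀ a, ‖∑ i, Z i a‖^2 = ∑ i, ∑ j, ⟪Z i a, Z j a⟫ := by
      intro a
      rw [← real_inner_self_eq_norm_sq, sum_inner]
      exact Finset.sum_congr rfl fun i _ => inner_sum _ _ _
    simp_rw [hpt]
    rw [integral_finset_sum _ (fun i _ => integrable_finset_sum _ (fun j _ => hII i j))]
    refine Finset.sum_congr rfl fun i _ => ?_
    rw [integral_finset_sum _ (fun j _ => hII i j)]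
    rw [Finset.sum_eq_single i (fun j _ hji => hcross i j (Ne.symm hji))
      (fun h => absurd (Finset.mem_univ i) h)]
    congr 1
    funext a
    rw [real_inner_self_eq_norm_sq]
  -- second moment of Z i
  have hZsec : ∀ i, ∫ a, ‖Z i a‖^2 ∂ℙ ≤ ω₀ * ‖g i‖^2 := by
    intro i
    have hpt : ∀ a, ‖Z i a‖^2 = ‖Y i a‖^2 - 2 * ⟪Y i a, g i⟫ + ‖g i‖^2 := by
      intro a
      rw [hZdef]
      exact norm_sub_sq_real _ _
    have hint1 : Integrable (fun a => ‖Y i a‖^2) ℙ := (hY2 i).norm.integrable_sq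
    have hint2 : Integrable (fun a => ⟪Y i a, g i⟫) ℙ :=
      ((hY2 i).inner_const (g i)).integrable one_le_two
    have hip : ∫ a, ⟪Y i a, g i⟫ ∂ℙ = ‖g i‖^2 := by
      have hcomm : ∀ a, ⟪Y i a, g i⟫ = (innerSL ℝ (g i)) (Y i a) := by
        intro a
        simp only [innerSL_apply_apply]
        exact real_inner_comm _ _
      simp_rw [hcomm]
      rw [(innerSL ℝ (g i)).integral_comp_comm (hYint i), hYmean i]
      simp only [innerSL_apply_apply]
      exact real_inner_self_eq_norm_sq _
    calc ∫ a, ‖Z i a‖^2 ∂ℙ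
        = ∫ a, (‖Y i a‖^2 - 2 * ⟪Y i a, g i⟫ + ‖g i‖^2) ∂ℙ := by simp_rw [hpt]
      _ = ∫ a, ‖Y i a‖^2 ∂ℙ - 2 * ∫ a, ⟪Y i a, g i⟫ ∂ℙ + ‖g i‖^2 := by
          have hB : Integrable (fun a => 2 * ⟪Y i a, g i⟫) ℙ := hint2.const_mul 2
          have hA : Integrable (fun a => ‖Y i a‖^2 - 2 * ⟪Y i a, g i⟫) ℙ := hint1.sub hB
          rw [integral_add hA (integrable_const _),
            integral_sub hint1 hB, integral_const_mul, integral_const]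
          simp
      _ = ∫ a, ‖Y i a‖^2 ∂ℙ - 2 * ‖g i‖^2 + ‖g i‖^2 := by rw [hip]
      _ ≤ ω₀ * ‖g i‖^2 - 2 * ‖g i‖^2 + ‖g i‖^2 := by linarith [hYsecond i]
      _ ≤ ω₀ * ‖g i‖^2 := by nlinarith [sq_nonneg ‖g i‖]
  -- rewrite the integrand
  have hrw : ∀ a : Ω, (1/(n:ℝ)) • ∑ i, Y i a + gradient F w - gradient F x
      = (1/(n:ℝ)) • ∑ i, Z i a := by
    intro a
    rw [hgradF w, hgradF x]
    have : ∑ i, Z i a = ∑ i, Y i a - (∑ i, gradient (f i) x - ∑ i, gradient (f i) w) := by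
      rw [hZdef]
      simp only
      rw [Finset.sum_sub_distrib]
      congr 1
      rw [← Finset.sum_sub_distrib]
      exact Finset.sum_congr rfl fun i _ => hg i
    rw [this, smul_sub, smul_sub]
    abel
  simp_rw [hrw]
  -- norm of the scaled sum
  have hsc : ∀ a : Ω, ‖(1/(n:ℝ)) • ∑ i, Z i a‖^2 = (1/(n:ℝ))^2 * ‖∑ i, Z i a‖^2 := by
    intro a
    rw [norm_smul, mul_pow, Real.norm_eq_abs, abs_of_pos (by positivity : (0:ℝ) < 1/(n:ℝ))]
  simp_rw [hsc]
  rw [integral_const_mul, hvar]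
  -- per-term bound
  set t : Fin n → ℝ := fun i => f i w - f i x - ⟪gradient (f i) x, w - x⟫ with ht
  have hterm : ∀ i, ∫ a, ‖Z i a‖^2 ∂ℙ ≤ ω₀ * (2 * L * t i) := by
    intro i
    have hco := dhpl_cocoercive (hdiff i) (hconv i) hL (hsmooth i) x w
    have : ‖g i‖^2 ≤ 2 * L * t i := by rw [hg i]; exact hco
    calc ∫ a, ‖Z i a‖^2 ∂ℙ ≤ ω₀ * ‖g i‖^2 := hZsec i
    _ ≤ ω₀ * (2 * L * t i) := mul_le_mul_of_nonneg_left this (by linarith)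
  -- RHS equals (1/n) * sum of t
  have hRHS : F w - F x - ⟪gradient F x, w - x⟫ = (1/(n:ℝ)) * ∑ i, t i := by
    rw [hgradF x, hF]
    simp only
    rw [real_inner_smul_left, sum_inner]
    rw [ht]
    simp only [Finset.sum_sub_distrib]
    push_cast
    ring
  rw [hRHS]
  calc (1/(n:ℝ))^2 * ∑ i, ∫ a, ‖Z i a‖^2 ∂ℙ
      ≤ (1/(n:ℝ))^2 * ∑ i, ω₀ * (2 * L * t i) := by
        apply mul_le_mul_of_nonneg_left (Finset.sum_le_sum fun i _ => hterm i) (by positivity)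
    _ = 2 * L * ω₀ / n * ((1/(n:ℝ)) * ∑ i, t i) := by
        rw [Finset.mul_sum, Finset.mul_sum]
        rw [Finset.mul_sum]
        apply Finset.sum_congr rfl
        intro i _
        field_simp
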